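/- Let λ > 0 be real, N a positive natural number, and g_1, …, g_N ∈ ℝ^D. Define matrices A_0 = λ^{-1} I_D and, for 0 ≤ m < N, A_{m+1} = A_m − (A_m g_{m+1} g_{m+1}ᵀ A_m) / (N + g_{m+1}ᵀ A_m g_{m+1}). Then every A_m is symmetric positive definite, every denominator N + g_{m+1}ᵀ A_m g_{m+1} is strictly positive, and for every m ≤ N, A_m = (λ I_D + (1/N) ∑_{i=1}^{m} g_i g_iᵀ)^{-1}. In particular A_N is the inverse of the damped empirical Fisher matrix λ I_D + (1/N) ∑_{i=1}^{N} g_i g_iᵀ. -/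

import Mathlib

open Matrix

section Aux

variable {D : ℕ}

lemma wf_vmv_mul_vmv (u v w x : Fin D → ℝ) (C : Matrix (Fin D) (Fin D) ℝ) :
    vecMulVec u v * C * vecMulVec w x = (v ⬝ᵥ (C *ᵥ w)) • vecMulVec u x := by
  ext i j
  simp only [Matrix.mul_apply, vecMulVec_apply, Matrix.smul_apply, dotProduct,
    Matrix.mulVec, smul_eq_mul, Finset.mul_sum, Finset.sum_mul]
  rw [Finset.sum_comm]
  refine Finset.sum_congr rfl fun k _ => Finset.sum_congr rfl fun l _ => by ring

lemma wf_posDef_smul_one {l : ℝ} (hl : 0 < l) :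
    (l • (1 : Matrix (Fin D) (Fin D) ℝ)).PosDef := by
  refine Matrix.PosDef.of_dotProduct_mulVec_pos ?_ ?_
  · simp [Matrix.IsHermitian, Matrix.conjTranspose_smul]
  · intro x hx
    have hxx : 0 < x ⬝ᵥ x := by
      have := dotProduct_self_eq_zero (v := x)
      rcases lt_or_eq_of_le (dotProduct_self_star_nonneg x) with h | h
      · simpa [star_trivial] using h
      · exact absurd (dotProduct_self_eq_zero.mp (by simpa [star_trivial] using h.symm)) hx
    simpa [Matrix.smul_mulVec, star_trivial, dotProduct_smul] using mul_pos hl hxx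

lemma wf_posSemidef_vmv (v : Fin D → ℝ) : (vecMulVec v v).PosSemidef := by
  refine Matrix.PosSemidef.of_dotProduct_mulVec_nonneg ?_ ?_
  · ext i j; simp [Matrix.conjTranspose_apply, vecMulVec_apply, mul_comm]
  · intro x
    have : vecMulVec v v *ᵥ x = (v ⬝ᵥ x) • v := by
      ext i
      simp only [Matrix.mulVec, vecMulVec_apply, dotProduct, Pi.smul_apply, smul_eq_mul,
        Finset.sum_mul]
      exact Finset.sum_congr rfl fun k _ => by ring
    rw [this]
    simp only [star_trivial, dotProduct_smul, smul_eq_mul, dotProduct_comm x v]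
    exact mul_self_nonneg _

lemma wf_posSemidef_smul {c : ℝ} (hc : 0 ≤ c) {M : Matrix (Fin D) (Fin D) ℝ}
    (hM : M.PosSemidef) : (c • M).PosSemidef := by
  refine Matrix.PosSemidef.of_dotProduct_mulVec_nonneg ?_ ?_
  · have h1 := hM.1
    unfold Matrix.IsHermitian at *
    rw [Matrix.conjTranspose_smul, h1, star_trivial]
  · intro x
    simp only [Matrix.smul_mulVec, dotProduct_smul, smul_eq_mul]
    exact mul_nonneg hc (hM.dotProduct_mulVec_nonneg x)

end Aux

/-- Closed form of the WoodFisher matrix recurrence: starting from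
`A 0 = λ⁻¹ I` and applying the rank-one updates
`A (m+1) = A m - (A m g_{m+1} g_{m+1}ᵀ A m) / (N + g_{m+1}ᵀ A m g_{m+1})`,
every `A m` is symmetric positive definite, every denominator is strictly
positive, and `A m` equals the inverse of the partially damped empirical
Fisher `λ I + (1/N) ∑_{i=1}^m g_i g_iᵀ`; in particular `A N` is the inverse of
the damped empirical Fisher matrix. -/
theorem woodfisher_recurrence_closed_form
    (D : ℕ) (l : ℝ) (hl : 0 < l) (N : ℕ) (hN : 0 < N)
    (g : Fin N → Fin D → ℝ)
    (A : ℕ → Matrix (Fin D) (Fin D) ℝ)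
    (hA0 : A 0 = l⁻¹ • 1)
    (hA : ∀ m (hm : m < N),
      A (m + 1) = A m -
        ((N : ℝ) + g ⟨m, hm⟩ ⬝ᵥ (A m *ᵥ g ⟨m, hm⟩))⁻¹ •
          (A m * vecMulVec (g ⟨m, hm⟩) (g ⟨m, hm⟩) * A m)) :
    (∀ m ≤ N, (A m).PosDef) ∧
    (∀ m (hm : m < N), 0 < (N : ℝ) + g ⟨m, hm⟩ ⬝ᵥ (A m *ᵥ g ⟨m, hm⟩)) ∧
    (∀ m ≤ N, A m =
      (l • 1 + ((1 : ℝ) / N) •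
        ∑ i ∈ Finset.univ.filter (fun i : Fin N => (i : ℕ) < m),
          vecMulVec (g i) (g i))⁻¹) := by
  have hN0 : (N : ℝ) ≠ 0 := Nat.cast_ne_zero.mpr hN.ne'
  set S : ℕ → Matrix (Fin D) (Fin D) ℝ := fun m =>
    ∑ i ∈ Finset.univ.filter (fun i : Fin N => (i : ℕ) < m), vecMulVec (g i) (g i) with hS
  set B : ℕ → Matrix (Fin D) (Fin D) ℝ := fun m => l • 1 + ((1 : ℝ) / N) • S m with hB
  -- positive definiteness of B m
  have hSpsd' : ∀ t : Finset (Fin N),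
      (∑ i ∈ t, vecMulVec (g i) (g i)).PosSemidef := by
    intro t
    induction t using Finset.induction_on with
    | empty => simpa using Matrix.PosSemidef.zero
    | insert _ _ h ih => rw [Finset.sum_insert h]; exact (wf_posSemidef_vmv _).add ih
  have hSpsd : ∀ m, (S m).PosSemidef := fun m => hSpsd' _
  have hBpd : ∀ m, (B m).PosDef := by
    intro m
    exact (wf_posDef_smul_one hl).add_posSemidef
      (wf_posSemidef_smul (by positivity) (hSpsd m))
  -- filter splitting
  have hBsucc : ∀ (m : ℕ) (hm : m < N),
      B (m + 1) = B m + ((1 : ℝ) / N) • vecMulVec (g ⟨m, hm⟩) (g ⟨m, hm⟩) := by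
    intro m hm
    have hfilt : Finset.univ.filter (fun i : Fin N => (i : ℕ) < m + 1) =
        insert ⟨m, hm⟩ (Finset.univ.filter (fun i : Fin N => (i : ℕ) < m)) := by
      ext i
      simp [Nat.lt_succ_iff_lt_or_eq, Fin.ext_iff, or_comm]
      exact le_iff_eq_or_lt
    have hnotmem : (⟨m, hm⟩ : Fin N) ∉
        Finset.univ.filter (fun i : Fin N => (i : ℕ) < m) := by simp
    have hSs : S (m + 1) = vecMulVec (g ⟨m, hm⟩) (g ⟨m, hm⟩) + S m := by
      rw [hS]
      simp only
      rw [hfilt, Finset.sum_insert hnotmem]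
    rw [hB]
    simp only
    rw [hSs, smul_add]
    abel
  -- main induction: A m = (B m)⁻¹
  have key : ∀ m, m ≤ N → A m = (B m)⁻¹ := by
    intro m
    induction m with
    | zero =>
      intro _
      have hS0 : S 0 = 0 := by
        rw [hS]; simp
      have hB0 : B 0 = l • 1 := by rw [hB]; simp [hS0]
      rw [hB0, hA0]
      refine (Matrix.inv_eq_left_inv ?_).symm
      rw [smul_mul_smul_comm, inv_mul_cancel₀ hl.ne', one_mul, one_smul]
    | succ m ih =>
      intro hm1
      have hm : m < N := Nat.lt_of_succ_le hm1
      have ihm := ih (le_of_lt hm)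
      set u := g ⟨m, hm⟩ with hu
      set C := A m with hC
      set M := vecMulVec u u with hM
      set s : ℝ := u ⬝ᵥ (C *ᵥ u) with hs
      have hCpd : C.PosDef := by rw [ihm]; exact (hBpd m).inv
      have hs0 : 0 ≤ s := by
        have := hCpd.posSemidef.dotProduct_mulVec_nonneg u
        simpa [star_trivial, hs] using this
      have hd : (0 : ℝ) < (N : ℝ) + s :=
        add_pos_of_pos_of_nonneg (by exact_mod_cast hN) hs0
      have hCB : C * B m = 1 := by
        rw [ihm]; exact Matrix.nonsing_inv_mul _ ((Matrix.isUnit_iff_isUnit_det _).mp (hBpd m).isUnit)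
      have hMCM : M * C * M = s • M := by
        rw [hM, wf_vmv_mul_vmv, ← hs]
      -- the left-inverse computation
      have hleft : A (m + 1) * B (m + 1) = 1 := by
        rw [hA m hm, hBsucc m hm, ← hu, ← hC, ← hM, ← hs]
        have expand :
            (C - ((N : ℝ) + s)⁻¹ • (C * M * C)) * (B m + ((1 : ℝ) / N) • M) =
              C * B m + ((1 : ℝ) / N) • (C * M)
                - ((N : ℝ) + s)⁻¹ • (C * M * (C * B m))
                - (((N : ℝ) + s)⁻¹ * ((1 : ℝ) / N)) • (C * (M * C * M)) := by
          simp only [sub_mul, Matrix.mul_add, Matrix.add_mul, smul_mul_assoc,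
            Matrix.mul_smul, smul_add, smul_smul, Matrix.mul_assoc]
          abel
        rw [expand, hCB, Matrix.mul_one, hMCM, Matrix.mul_smul, smul_smul]
        have hcoeff : ((1 : ℝ) / N) - ((N : ℝ) + s)⁻¹
            - (((N : ℝ) + s)⁻¹ * ((1 : ℝ) / N) * s) = 0 := by
          field_simp
          ring
        calc 1 + ((1 : ℝ) / N) • (C * M) - ((N : ℝ) + s)⁻¹ • (C * M)
              - (((N : ℝ) + s)⁻¹ * ((1 : ℝ) / N) * s) • (C * M)
            = 1 + (((1 : ℝ) / N) - ((N : ℝ) + s)⁻¹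
                - (((N : ℝ) + s)⁻¹ * ((1 : ℝ) / N) * s)) • (C * M) := by
              simp only [sub_smul]; abel
          _ = 1 := by rw [hcoeff, zero_smul, add_zero]
      exact (Matrix.inv_eq_left_inv hleft).symm
  refine ⟨fun m hm => ?_, fun m hm => ?_, fun m hm => key m hm⟩
  · rw [key m hm]; exact (hBpd m).inv
  · have hCpd : (A m).PosDef := by rw [key m (le_of_lt hm)]; exact (hBpd m).inv
    have hs0 : 0 ≤ g ⟨m, hm⟩ ⬝ᵥ (A m *ᵥ g ⟨m, hm⟩) := by
      have := hCpd.posSemidef.dotProduct_mulVec_nonneg (g ⟨m, hm⟩)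
      simpa [star_trivial] using this
    exact add_pos_of_pos_of_nonneg (by exact_mod_cast hN) hs0
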